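/- For b_i^{(k)} = Π_{j=1}^{i} k/(k + j λ_c/λ) with fixed positive λ_c, λ, one has (1/√k)·Σ_{i=1}^{k−1} b_i^{(k)} → √(π λ /(2 λ_c)) as k → ∞, and b_{k−1}^{(k)} → 0. -/

import Mathlib

open Filter Real MeasureTheory intervalIntegral Topology

noncomputable def s8gau (c x : ℝ) : ℝ := Real.exp (-(c/2) * x^2)

noncomputable def s8P (c : ℝ) (k i : ℕ) : ℝ := ∏ j ∈ Finset.Icc 1 i, (k:ℝ) / (k + j * c)

def s8m (k : ℕ) : ℕ := Nat.sqrt k * Nat.log 2 k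

noncomputable def s8d (c : ℝ) (k : ℕ) : ℝ := c^2 * (s8m k : ℝ)^3 / (k:ℝ)^2

noncomputable def s8B (c : ℝ) (k : ℕ) : ℝ :=
  Real.sqrt k * Real.exp (s8d c k - c * (s8m k : ℝ)^2 / (2*k))

section basics
variable {c : ℝ} (hc : 0 < c) {k i : ℕ}
include hc

lemma s8denom_pos (hk : 1 ≤ k) (j : ℕ) : (0:ℝ) < (k:ℝ) + j * c := by
  have : (1:ℝ) ≤ k := by exact_mod_cast hk
  have : (0:ℝ) ≤ (j:ℝ) * c := by positivity
  linarith

lemma s8fac_pos (hk : 1 ≤ k) (j : ℕ) : (0:ℝ) < (k:ℝ) / ((k:ℝ) + j * c) := by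
  have h1 : (1:ℝ) ≤ k := by exact_mod_cast hk
  exact div_pos (by linarith) (s8denom_pos hc hk j)

lemma s8fac_le_one (hk : 1 ≤ k) (j : ℕ) : (k:ℝ) / ((k:ℝ) + j * c) ≤ 1 := by
  rw [div_le_one (s8denom_pos hc hk j)]
  have : (0:ℝ) ≤ (j:ℝ) * c := by positivity
  linarith

lemma s8P_pos (hk : 1 ≤ k) : 0 < s8P c k i :=
  Finset.prod_pos fun j _ => s8fac_pos hc hk j

lemma s8P_le_one (hk : 1 ≤ k) : s8P c k i ≤ 1 :=
  Finset.prod_le_one (fun j _ => (s8fac_pos hc hk j).le) (fun j _ => s8fac_le_one hc hk j)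

lemma s8P_anti (hk : 1 ≤ k) {i i' : ℕ} (h : i ≤ i') : s8P c k i' ≤ s8P c k i := by
  have h0 : Finset.Icc 1 i = Finset.Ioc 0 i := by rw [← Finset.Icc_add_one_left_eq_Ioc, zero_add]
  have h0' : Finset.Icc 1 i' = Finset.Ioc 0 i' := by rw [← Finset.Icc_add_one_left_eq_Ioc, zero_add]
  unfold s8P
  rw [h0, h0', ← Finset.prod_Ioc_consecutive _ (Nat.zero_le i) h]
  have hrest : (∏ j ∈ Finset.Ioc i i', (k:ℝ) / (k + j * c)) ≤ 1 :=
    Finset.prod_le_one (fun j _ => (s8fac_pos hc hk j).le) (fun j _ => s8fac_le_one hc hk j)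
  have hpos : 0 < ∏ j ∈ Finset.Ioc 0 i, (k:ℝ) / (k + j * c) := by
    have := s8P_pos (c := c) (k := k) (i := i) hc hk
    rwa [s8P, h0] at this
  nlinarith [Finset.prod_nonneg (fun j (_ : j ∈ Finset.Ioc i i') => (s8fac_pos hc hk j).le)]

omit hc in
lemma s8sum_Icc_id (i : ℕ) : (∑ j ∈ Finset.Icc 1 i, (j:ℝ)) = i * (i+1) / 2 := by
  induction i with
  | zero => simp
  | succ n ih =>
    rw [Finset.sum_Icc_succ_top (by omega)]
    push_cast
    rw [ih]; ring

omit hc in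
lemma s8sum_sq_le (i : ℕ) : (∑ j ∈ Finset.Icc 1 i, (j:ℝ)^2) ≤ (i:ℝ)^3 := by
  calc (∑ j ∈ Finset.Icc 1 i, (j:ℝ)^2) ≤ ∑ j ∈ Finset.Icc 1 i, (i:ℝ)^2 := by
        apply Finset.sum_le_sum
        intro j hj
        have : j ≤ i := (Finset.mem_Icc.mp hj).2
        have : (j:ℝ) ≤ i := by exact_mod_cast this
        have : (0:ℝ) ≤ j := by positivity
        nlinarith
    _ = (i:ℝ)^3 := by
        rw [Finset.sum_const, Nat.card_Icc]
        simp [nsmul_eq_mul]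
        ring

lemma s8fac_lower (hk : 1 ≤ k) (j : ℕ) :
    Real.exp (-((j:ℝ) * c / k)) ≤ (k:ℝ) / ((k:ℝ) + j * c) := by
  have hk' : (0:ℝ) < k := by exact_mod_cast Nat.lt_of_lt_of_le Nat.zero_lt_one hk
  have hd := s8denom_pos hc hk j
  have h1 : (k:ℝ) + j * c ≤ k * Real.exp ((j:ℝ) * c / k) := by
    have h2 := Real.add_one_le_exp ((j:ℝ) * c / k)
    calc (k:ℝ) + j * c = k * ((j:ℝ) * c / k + 1) := by field_simp; ring
      _ ≤ k * Real.exp ((j:ℝ) * c / k) := by nlinarith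
  rw [le_div_iff₀ hd]
  calc Real.exp (-((j:ℝ)*c/k)) * ((k:ℝ) + j*c)
      ≤ Real.exp (-((j:ℝ)*c/k)) * (k * Real.exp ((j:ℝ)*c/k)) := by
        have := (Real.exp_pos (-((j:ℝ)*c/k))).le
        gcongr
    _ = k * (Real.exp (-((j:ℝ)*c/k)) * Real.exp ((j:ℝ)*c/k)) := by ring
    _ = k := by rw [← Real.exp_add]; simp

lemma s8fac_upper (hk : 1 ≤ k) (j : ℕ) :
    (k:ℝ) / ((k:ℝ) + j * c) ≤ Real.exp (((j:ℝ) * c / k)^2 - (j:ℝ) * c / k) := by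
  have hk' : (0:ℝ) < k := by exact_mod_cast Nat.lt_of_lt_of_le Nat.zero_lt_one hk
  have hd := s8denom_pos hc hk j
  set t : ℝ := (j:ℝ) * c / k with ht
  have ht0 : 0 ≤ t := by positivity
  have h1t : (0:ℝ) < 1 + t := by linarith
  have h1 : (k:ℝ) / ((k:ℝ) + j * c) = 1 - t / (1 + t) := by
    rw [ht]
    field_simp
    ring
  have h2 : (1:ℝ) - t / (1+t) ≤ Real.exp (-(t/(1+t))) := by
    have := Real.add_one_le_exp (-(t/(1+t)))
    linarith
  have hu : t/(1+t) * (1+t) = t := div_mul_cancel₀ _ h1t.ne'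
  have h3 : Real.exp (-(t/(1+t))) ≤ Real.exp (t^2 - t) := by
    apply Real.exp_le_exp.2
    nlinarith [pow_nonneg ht0 3]
  rw [h1]
  exact h2.trans h3

end basics

section bounds
variable {c : ℝ} (hc : 0 < c) {k : ℕ}
include hc

lemma s8P_lower (hk : 1 ≤ k) (i : ℕ) :
    s8gau c (((i:ℝ)+1)/Real.sqrt k) ≤ s8P c k i := by
  have hk' : (0:ℝ) < k := by exact_mod_cast Nat.lt_of_lt_of_le Nat.zero_lt_one hk
  have h1 : Real.exp (-(c/k) * (i*(i+1)/2)) ≤ s8P c k i := by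
    have hs : (∑ j ∈ Finset.Icc 1 i, -((j:ℝ)*c/k)) = -(c/k) * (i*(i+1)/2) := by
      have h : ∀ j ∈ Finset.Icc 1 i, -((j:ℝ)*c/k) = (j:ℝ) * (-(c/k)) := fun j _ => by ring
      rw [Finset.sum_congr rfl h, ← Finset.sum_mul, s8sum_Icc_id]
      ring
    calc Real.exp (-(c/k)*(i*(i+1)/2)) = ∏ j ∈ Finset.Icc 1 i, Real.exp (-((j:ℝ)*c/k)) := by
          rw [← Real.exp_sum, hs]
      _ ≤ s8P c k i := Finset.prod_le_prod (fun j _ => (Real.exp_pos _).le)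
          (fun j _ => s8fac_lower hc hk j)
  refine le_trans ?_ h1
  unfold s8gau
  apply Real.exp_le_exp.2
  have hsq : (((i:ℝ)+1)/Real.sqrt k)^2 = ((i:ℝ)+1)^2 / k := by
    rw [div_pow, Real.sq_sqrt hk'.le]
  rw [hsq]
  have e1 : -(c/2)*(((i:ℝ)+1)^2/k) = -(c*((i:ℝ)+1)^2/(2*k)) := by ring
  have e2 : -(c/k)*((i:ℝ)*((i:ℝ)+1)/2) = -(c*((i:ℝ)*((i:ℝ)+1))/(2*k)) := by ring
  rw [e1, e2, neg_le_neg_iff]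
  gcongr
  nlinarith [Nat.cast_nonneg (α := ℝ) i]

lemma s8P_upper (hk : 1 ≤ k) (i : ℕ) :
    s8P c k i ≤ Real.exp (c^2*(i:ℝ)^3/(k:ℝ)^2) * s8gau c ((i:ℝ)/Real.sqrt k) := by
  have hk' : (0:ℝ) < k := by exact_mod_cast Nat.lt_of_lt_of_le Nat.zero_lt_one hk
  have h1 : s8P c k i ≤ Real.exp ((c^2/k^2) * (∑ j ∈ Finset.Icc 1 i, (j:ℝ)^2)
      - (c/k) * (i*(i+1)/2)) := by
    calc s8P c k i ≤ ∏ j ∈ Finset.Icc 1 i, Real.exp (((j:ℝ)*c/k)^2 - (j:ℝ)*c/k) :=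
          Finset.prod_le_prod (fun j _ => (s8fac_pos hc hk j).le)
            (fun j _ => s8fac_upper hc hk j)
      _ = Real.exp (∑ j ∈ Finset.Icc 1 i, (((j:ℝ)*c/k)^2 - (j:ℝ)*c/k)) := (Real.exp_sum _ _).symm
      _ = Real.exp ((c^2/k^2) * (∑ j ∈ Finset.Icc 1 i, (j:ℝ)^2) - (c/k) * (i*(i+1)/2)) := by
          congr 1
          rw [Finset.sum_sub_distrib]
          congr 1
          · rw [Finset.mul_sum]
            exact Finset.sum_congr rfl fun j _ => by field_simp
          · rw [← s8sum_Icc_id i, Finset.mul_sum]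
            exact Finset.sum_congr rfl fun j _ => by ring
  refine h1.trans ?_
  unfold s8gau
  rw [← Real.exp_add]
  apply Real.exp_le_exp.2
  have hsq : ((i:ℝ)/Real.sqrt k)^2 = (i:ℝ)^2 / k := by
    rw [div_pow, Real.sq_sqrt hk'.le]
  rw [hsq]
  have h2 : (c^2/k^2) * (∑ j ∈ Finset.Icc 1 i, (j:ℝ)^2) ≤ c^2/k^2 * (i:ℝ)^3 := by
    have := s8sum_sq_le i
    have h3 : (0:ℝ) ≤ c^2/k^2 := by positivity
    nlinarith
  have h4 : (c/k) * ((i:ℝ)*((i:ℝ)+1)/2) ≥ c * (i:ℝ)^2/(2*k) := by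
    have e2 : (c/k)*((i:ℝ)*((i:ℝ)+1)/2) = c*((i:ℝ)*((i:ℝ)+1))/(2*k) := by
      field_simp
    rw [ge_iff_le, e2]
    gcongr
    nlinarith [Nat.cast_nonneg (α := ℝ) i]
  have h5 : -(c/2) * ((i:ℝ)^2/k) = -(c * (i:ℝ)^2/(2*k)) := by ring
  rw [h5]
  have h6 : c^2/k^2 * (i:ℝ)^3 = c^2*(i:ℝ)^3/(k:ℝ)^2 := by ring
  linarith [h2, h4]

end bounds

section gauf
variable {c : ℝ} (hc : 0 < c)

lemma s8gau_nonneg (x : ℝ) : 0 ≤ s8gau c x := (Real.exp_pos _).le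

include hc

lemma s8gau_le_one (x : ℝ) : s8gau c x ≤ 1 := by
  unfold s8gau
  rw [Real.exp_le_one_iff]
  nlinarith [sq_nonneg x]

lemma s8gau_integrable : MeasureTheory.IntegrableOn (s8gau c) (Set.Ioi 0) :=
  (integrable_exp_neg_mul_sq (by positivity : (0:ℝ) < c/2)).integrableOn

lemma s8gau_cont : Continuous (s8gau c) := by
  unfold s8gau
  fun_prop

lemma s8gau_anti {s : ℝ} (hs : 0 < s) {lo hi : ℝ} (hlo : 0 ≤ lo) :
    AntitoneOn (fun x => s8gau c (x / s)) (Set.Icc lo hi) := by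
  intro x hx y hy hxy
  simp only [s8gau]
  apply Real.exp_le_exp.2
  have hx0 : 0 ≤ x := le_trans hlo hx.1
  have h1 : x/s ≤ y/s := by gcongr
  have h0 : 0 ≤ x/s := by positivity
  have hp : (x/s)^2 ≤ (y/s)^2 := by nlinarith
  nlinarith

lemma s8gau_int_le (a : ℝ) :
    (∫ x in (0:ℝ)..a, s8gau c x) ≤ ∫ x in Set.Ioi (0:ℝ), s8gau c x := by
  rcases le_or_gt a 0 with h | h
  · rw [intervalIntegral.integral_of_ge h]
    have h2 : 0 ≤ ∫ x in Set.Ioi (0:ℝ), s8gau c x :=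
      MeasureTheory.setIntegral_nonneg measurableSet_Ioi (fun x _ => s8gau_nonneg x)
    have h3 : 0 ≤ ∫ x in Set.Ioc a 0, s8gau c x :=
      MeasureTheory.setIntegral_nonneg measurableSet_Ioc (fun x _ => s8gau_nonneg x)
    linarith
  · rw [intervalIntegral.integral_of_le h.le]
    apply MeasureTheory.setIntegral_mono_set (s8gau_integrable hc)
      (Filter.Eventually.of_forall fun x => s8gau_nonneg x)
      (HasSubset.Subset.eventuallyLE Set.Ioc_subset_Ioi_self)

end gauf

section riemann
variable {c : ℝ} (hc : 0 < c) {k : ℕ}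
include hc

lemma s8T_lower (hk : 1 ≤ k) :
    (∫ x in (2/Real.sqrt k)..(((k:ℝ)+1)/Real.sqrt k), s8gau c x)
      ≤ (1/Real.sqrt k) * ∑ i ∈ Finset.Icc 1 (k-1), s8P c k i := by
  have hk' : (0:ℝ) < k := by exact_mod_cast Nat.lt_of_lt_of_le Nat.zero_lt_one hk
  set s := Real.sqrt k with hsdef
  have hs : 0 < s := Real.sqrt_pos.2 hk'
  have hsum1 : ∑ i ∈ Finset.Icc 1 (k-1), s8gau c (((i:ℝ)+1)/s)
      ≤ ∑ i ∈ Finset.Icc 1 (k-1), s8P c k i :=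
    Finset.sum_le_sum fun i _ => s8P_lower hc hk i
  have hre : ∑ i ∈ Finset.range (k-1), (fun x => s8gau c (x/s)) (2 + (i:ℕ) : ℝ)
      = ∑ i ∈ Finset.Icc 1 (k-1), s8gau c (((i:ℝ)+1)/s) := by
    rw [show Finset.Icc 1 (k-1) = Finset.Ico 1 k by
      rw [← Finset.Ico_add_one_right_eq_Icc, show k-1+1 = k by omega]]
    rw [Finset.sum_Ico_eq_sum_range]
    apply Finset.sum_congr (by rw [show k - 1 = k - 1 from rfl])
    intro i _
    have : ((1+i : ℕ):ℝ) + 1 = 2 + (i:ℕ) := by push_cast; ring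
    rw [this]
  have hanti : AntitoneOn (fun x => s8gau c (x/s)) (Set.Icc (2:ℝ) (2 + (k-1 : ℕ))) :=
    s8gau_anti hc hs (by norm_num)
  have hint := AntitoneOn.integral_le_sum hanti
  have hend : (2:ℝ) + ((k-1 : ℕ):ℝ) = (k:ℝ) + 1 := by
    rw [Nat.cast_sub hk]; push_cast; ring
  rw [hend, hre] at hint
  have hcv : (∫ x in (2:ℝ)..((k:ℝ)+1), s8gau c (x/s))
      = s * ∫ x in (2/s)..(((k:ℝ)+1)/s), s8gau c x := by
    rw [intervalIntegral.integral_comp_div (s8gau c) hs.ne', smul_eq_mul]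
  rw [hcv] at hint
  calc (∫ x in (2/s)..(((k:ℝ)+1)/s), s8gau c x)
      = (1/s) * (s * ∫ x in (2/s)..(((k:ℝ)+1)/s), s8gau c x) := by
        field_simp
    _ ≤ (1/s) * ∑ i ∈ Finset.Icc 1 (k-1), s8gau c (((i:ℝ)+1)/s) := by
        have h1s : (0:ℝ) ≤ 1/s := by positivity
        exact mul_le_mul_of_nonneg_left hint h1s
    _ ≤ (1/s) * ∑ i ∈ Finset.Icc 1 (k-1), s8P c k i := by
        have h1s : (0:ℝ) ≤ 1/s := by positivity
        exact mul_le_mul_of_nonneg_left hsum1 h1s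

lemma s8head (hk : 1 ≤ k) (m : ℕ) :
    ∑ i ∈ Finset.Icc 1 m, s8gau c ((i:ℝ)/Real.sqrt k)
      ≤ Real.sqrt k * ∫ x in Set.Ioi (0:ℝ), s8gau c x := by
  have hk' : (0:ℝ) < k := by exact_mod_cast Nat.lt_of_lt_of_le Nat.zero_lt_one hk
  set s := Real.sqrt k with hsdef
  have hs : 0 < s := Real.sqrt_pos.2 hk'
  have hre : ∑ i ∈ Finset.Icc 1 m, s8gau c ((i:ℝ)/s)
      = ∑ i ∈ Finset.range m, (fun x => s8gau c (x/s)) ((0:ℝ) + ((i+1 : ℕ):ℝ)) := by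
    rw [show Finset.Icc 1 m = Finset.Ico 1 (m+1) by rw [← Finset.Ico_add_one_right_eq_Icc]]
    rw [Finset.sum_Ico_eq_sum_range]
    apply Finset.sum_congr (by norm_num)
    intro i _
    have : ((1+i : ℕ):ℝ) = (0:ℝ) + ((i+1 : ℕ):ℝ) := by push_cast; ring
    rw [← this]
  have hanti : AntitoneOn (fun x => s8gau c (x/s)) (Set.Icc (0:ℝ) (0 + (m : ℕ))) :=
    s8gau_anti hc hs le_rfl
  have hint := AntitoneOn.sum_le_integral hanti
  rw [← hre] at hint
  have hcv : (∫ x in (0:ℝ)..(0 + (m:ℝ)), s8gau c (x/s))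
      = s * ∫ x in (0:ℝ)..((m:ℝ)/s), s8gau c x := by
    rw [intervalIntegral.integral_comp_div (s8gau c) hs.ne', smul_eq_mul, zero_add, zero_div]
  rw [show ((0:ℝ) + ((m:ℕ):ℝ)) = (0 + (m:ℝ)) by push_cast; ring] at hint
  rw [hcv] at hint
  calc ∑ i ∈ Finset.Icc 1 m, s8gau c ((i:ℝ)/s)
      ≤ s * ∫ x in (0:ℝ)..((m:ℝ)/s), s8gau c x := hint
    _ ≤ s * ∫ x in Set.Ioi (0:ℝ), s8gau c x :=
        mul_le_mul_of_nonneg_left (s8gau_int_le hc _) hs.le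

lemma s8tail (hk : 1 ≤ k) {m : ℕ} (hm : m ≤ k-1) :
    ∑ i ∈ Finset.Ioc m (k-1), s8P c k i ≤ (k:ℝ) * s8P c k m := by
  calc ∑ i ∈ Finset.Ioc m (k-1), s8P c k i
      ≤ (Finset.Ioc m (k-1)).card • s8P c k m :=
        Finset.sum_le_card_nsmul _ _ _ (fun i hi => s8P_anti hc hk (Finset.mem_Ioc.mp hi).1.le)
    _ = ((k-1-m : ℕ):ℝ) * s8P c k m := by rw [Nat.card_Ioc, nsmul_eq_mul]
    _ ≤ (k:ℝ) * s8P c k m := by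
        apply mul_le_mul_of_nonneg_right _ (s8P_pos hc hk).le
        exact_mod_cast Nat.le_of_lt_succ (by omega)

end riemann

section upper
variable {c : ℝ} (hc : 0 < c) {k : ℕ}
include hc

lemma s8T_upper (hk : 1 ≤ k) (hmk : s8m k ≤ k - 1) :
    (1/Real.sqrt k) * ∑ i ∈ Finset.Icc 1 (k-1), s8P c k i
      ≤ Real.exp (s8d c k) * (∫ x in Set.Ioi (0:ℝ), s8gau c x) + s8B c k := by
  have hk' : (0:ℝ) < k := by exact_mod_cast Nat.lt_of_lt_of_le Nat.zero_lt_one hk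
  set m := s8m k with hmdef
  set s := Real.sqrt k with hsdef
  have hs : 0 < s := Real.sqrt_pos.2 hk'
  set I := ∫ x in Set.Ioi (0:ℝ), s8gau c x with hI
  have hsplit : (∑ i ∈ Finset.Icc 1 (k-1), s8P c k i)
      = (∑ i ∈ Finset.Icc 1 m, s8P c k i) + ∑ i ∈ Finset.Ioc m (k-1), s8P c k i := by
    rw [show Finset.Icc 1 (k-1) = Finset.Ioc 0 (k-1) by rw [← Finset.Icc_add_one_left_eq_Ioc, zero_add],
        show Finset.Icc 1 m = Finset.Ioc 0 m by rw [← Finset.Icc_add_one_left_eq_Ioc, zero_add],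
        Finset.sum_Ioc_consecutive _ (Nat.zero_le m) hmk]
  have hhead : ∑ i ∈ Finset.Icc 1 m, s8P c k i ≤ Real.exp (s8d c k) * (s * I) := by
    have h1 : ∀ i ∈ Finset.Icc 1 m, s8P c k i ≤ Real.exp (s8d c k) * s8gau c ((i:ℝ)/s) := by
      intro i hi
      have him : i ≤ m := (Finset.mem_Icc.mp hi).2
      refine (s8P_upper hc hk i).trans ?_
      apply mul_le_mul_of_nonneg_right _ (s8gau_nonneg _)
      apply Real.exp_le_exp.2
      rw [s8d]
      have him' : (i:ℝ) ≤ (s8m k : ℝ) := by exact_mod_cast him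
      gcongr
    calc (∑ i ∈ Finset.Icc 1 m, s8P c k i)
        ≤ ∑ i ∈ Finset.Icc 1 m, Real.exp (s8d c k) * s8gau c ((i:ℝ)/s) :=
          Finset.sum_le_sum h1
      _ = Real.exp (s8d c k) * ∑ i ∈ Finset.Icc 1 m, s8gau c ((i:ℝ)/s) := by
          rw [Finset.mul_sum]
      _ ≤ Real.exp (s8d c k) * (s * I) :=
          mul_le_mul_of_nonneg_left (s8head hc hk m) (Real.exp_pos _).le
  have hPm : s8P c k m ≤ Real.exp (s8d c k - c * (m:ℝ)^2 / (2*k)) := by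
    refine (s8P_upper hc hk m).trans ?_
    have hsq : ((m:ℝ)/s)^2 = (m:ℝ)^2 / k := by
      rw [div_pow, hsdef, Real.sq_sqrt hk'.le]
    have : s8gau c ((m:ℝ)/s) = Real.exp (-(c * (m:ℝ)^2 / (2*k))) := by
      simp only [s8gau, hsq]
      congr 1
      ring
    rw [this, ← Real.exp_add, s8d]
    apply Real.exp_le_exp.2
    apply le_of_eq
    ring
  have htail : ∑ i ∈ Finset.Ioc m (k-1), s8P c k i
      ≤ (k:ℝ) * Real.exp (s8d c k - c * (m:ℝ)^2 / (2*k)) := by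
    refine (s8tail hc hk hmk).trans ?_
    exact mul_le_mul_of_nonneg_left hPm hk'.le
  rw [hsplit, mul_add]
  have h1s : (0:ℝ) ≤ 1/s := by positivity
  have e1 : (1/s) * (Real.exp (s8d c k) * (s * I)) = Real.exp (s8d c k) * I := by
    field_simp
  have e2 : (1/s) * ((k:ℝ) * Real.exp (s8d c k - c * (m:ℝ)^2 / (2*k))) = s8B c k := by
    rw [s8B, ← hmdef, ← hsdef]
    rw [show (1/s) * ((k:ℝ) * Real.exp (s8d c k - c * (m:ℝ)^2 / (2*k)))
        = ((k:ℝ)/s) * Real.exp (s8d c k - c * (m:ℝ)^2 / (2*k)) by ring]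
    rw [hsdef, Real.div_sqrt]
  calc (1/s) * (∑ i ∈ Finset.Icc 1 m, s8P c k i)
        + (1/s) * ∑ i ∈ Finset.Ioc m (k-1), s8P c k i
      ≤ (1/s) * (Real.exp (s8d c k) * (s * I))
        + (1/s) * ((k:ℝ) * Real.exp (s8d c k - c * (m:ℝ)^2 / (2*k))) := by
        apply add_le_add (mul_le_mul_of_nonneg_left hhead h1s)
          (mul_le_mul_of_nonneg_left htail h1s)
    _ = Real.exp (s8d c k) * I + s8B c k := by rw [e1, e2]

end upper

section asymp
variable {c : ℝ} (hc : 0 < c) {k : ℕ}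

lemma s8log_tendsto : Tendsto (fun k : ℕ => Nat.log 2 k) atTop atTop := by
  apply Filter.tendsto_atTop_atTop.2
  intro n
  exact ⟨2^n, fun k hk => Nat.le_log_of_pow_le one_lt_two hk⟩

lemma s8sqrt_tendsto : Tendsto (fun k : ℕ => Real.sqrt k) atTop atTop := by
  apply Filter.tendsto_atTop_atTop.2
  intro b
  refine ⟨(⌈b⌉₊)^2, fun k hk => ?_⟩
  have h1 : (((⌈b⌉₊)^2 : ℕ):ℝ) ≤ (k:ℝ) := by exact_mod_cast hk
  have h2 := Real.sqrt_le_sqrt h1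
  rw [show (((⌈b⌉₊)^2 : ℕ):ℝ) = ((⌈b⌉₊:ℝ))^2 by push_cast; ring,
    Real.sqrt_sq (Nat.cast_nonneg _)] at h2
  linarith [Nat.le_ceil b]

lemma s8sqrt2_gt_one : (1:ℝ) < Real.sqrt 2 := by
  nlinarith [Real.sq_sqrt (by norm_num : (0:ℝ) ≤ 2), Real.sqrt_nonneg 2]

lemma s8aux1 : Tendsto (fun n : ℕ => (n:ℝ)^3 / (Real.sqrt 2)^n) atTop (𝓝 0) :=
  tendsto_pow_const_div_const_pow_of_one_lt 3 s8sqrt2_gt_one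

lemma s8m_le (k : ℕ) : (s8m k : ℝ) ≤ Real.sqrt k * (Nat.log 2 k : ℝ) := by
  rw [s8m]
  push_cast
  exact mul_le_mul_of_nonneg_right Real.nat_sqrt_le_real_sqrt (Nat.cast_nonneg _)

lemma s8sqrt_ge (hk : k ≠ 0) :
    (Real.sqrt 2) ^ (Nat.log 2 k) ≤ Real.sqrt k := by
  have h1 : (2:ℕ)^(Nat.log 2 k) ≤ k := Nat.pow_log_le_self 2 hk
  have h2 : ((2:ℝ))^(Nat.log 2 k) ≤ (k:ℝ) := by exact_mod_cast h1
  have h3 := Real.sqrt_le_sqrt h2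
  refine le_trans (le_of_eq ?_) h3
  have h4 : ((Real.sqrt 2)^(Nat.log 2 k))^2 = (2:ℝ)^(Nat.log 2 k) := by
    rw [← pow_mul, mul_comm, pow_mul, Real.sq_sqrt (by norm_num : (0:ℝ) ≤ 2)]
  rw [← h4, Real.sqrt_sq (by positivity)]

lemma s8d_nonneg (k : ℕ) : 0 ≤ s8d c k := by
  rw [s8d]
  positivity

include hc

lemma s8d_le (hk : 1 ≤ k) :
    s8d c k ≤ c^2 * ((Nat.log 2 k : ℝ)^3 / (Real.sqrt 2)^(Nat.log 2 k)) := by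
  have hk' : (0:ℝ) < k := by exact_mod_cast Nat.lt_of_lt_of_le Nat.zero_lt_one hk
  set L : ℝ := (Nat.log 2 k : ℝ) with hLdef
  have hL0 : (0:ℝ) ≤ L := Nat.cast_nonneg _
  have hs : 0 < Real.sqrt k := Real.sqrt_pos.2 hk'
  have h2L : (0:ℝ) < (Real.sqrt 2)^(Nat.log 2 k) := by positivity
  have hm0 : (0:ℝ) ≤ (s8m k : ℝ) := Nat.cast_nonneg _
  have h1 : (s8m k:ℝ)^3 ≤ (Real.sqrt k * L)^3 := pow_le_pow_left₀ hm0 (s8m_le k) 3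
  have h2 : (Real.sqrt k * L)^3 / (k:ℝ)^2 = L^3 / Real.sqrt k := by
    have h3 : (k:ℝ)^2 = (Real.sqrt k)^4 := by
      rw [show ((Real.sqrt k):ℝ)^4 = ((Real.sqrt k)^2)^2 by ring, Real.sq_sqrt hk'.le]
    rw [mul_pow, h3, div_eq_div_iff (by positivity) hs.ne']
    ring
  calc s8d c k = c^2 * ((s8m k:ℝ)^3 / (k:ℝ)^2) := by rw [s8d, mul_div_assoc]
    _ ≤ c^2 * ((Real.sqrt k * L)^3 / (k:ℝ)^2) := by gcongr
    _ = c^2 * (L^3 / Real.sqrt k) := by rw [h2]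
    _ ≤ c^2 * (L^3 / (Real.sqrt 2)^(Nat.log 2 k)) := by
        gcongr
        exact s8sqrt_ge (by omega)

lemma s8d_tendsto : Tendsto (fun k : ℕ => s8d c k) atTop (𝓝 0) := by
  apply squeeze_zero' (Filter.Eventually.of_forall (s8d_nonneg (c := c)))
  · filter_upwards [Filter.eventually_ge_atTop 1] with k hk
    exact s8d_le hc hk
  · have h1 : Tendsto (fun k : ℕ => ((Nat.log 2 k : ℝ)^3 / (Real.sqrt 2)^(Nat.log 2 k)))
        atTop (𝓝 0) := s8aux1.comp s8log_tendsto
    have := h1.const_mul (c^2)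
    simpa using this

lemma s8B_tendsto : Tendsto (fun k : ℕ => s8B c k) atTop (𝓝 0) := by
  set u : ℕ → ℝ := fun n => Real.exp (((n:ℝ)+1) * Real.log (Real.sqrt 2) + 1 - c * (n:ℝ)^2/8)
    with hu
  have hu0 : Tendsto u atTop (𝓝 0) := by
    have hq : Tendsto (fun n : ℕ => ((n:ℝ)+1) * Real.log (Real.sqrt 2) + 1 - c * (n:ℝ)^2/8)
        atTop atBot := by
      have hneg : Tendsto (fun n : ℕ => -(n:ℝ)) atTop atBot :=
        tendsto_neg_atTop_atBot.comp tendsto_natCast_atTop_atTop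
      refine Filter.tendsto_atBot_mono' atTop ?_ hneg
      have hlog1 : Real.log (Real.sqrt 2) ≤ 1 := by
        have h := Real.log_le_sub_one_of_pos (by positivity : (0:ℝ) < Real.sqrt 2)
        nlinarith [Real.sq_sqrt (by norm_num : (0:ℝ) ≤ 2), Real.sqrt_nonneg 2]
      have hlog0 : 0 ≤ Real.log (Real.sqrt 2) :=
        Real.log_nonneg (by nlinarith [Real.sq_sqrt (by norm_num : (0:ℝ) ≤ 2), Real.sqrt_nonneg 2])
      filter_upwards [Filter.eventually_ge_atTop (⌈32/c⌉₊ + 1)] with n hn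
      have hn1 : (1:ℝ) ≤ (n:ℝ) := by
        have : 1 ≤ n := le_trans (by omega) hn
        exact_mod_cast this
      have hn32 : 32/c ≤ (n:ℝ) := by
        have h1 : (⌈32/c⌉₊ : ℝ) ≤ n := by exact_mod_cast le_trans (by omega) hn
        linarith [Nat.le_ceil (32/c)]
      have hcn : 32 ≤ c * n := by
        rw [div_le_iff₀ hc] at hn32
        linarith
      have hq1 : c * (n:ℝ)^2 / 8 ≥ 4 * n := by
        rw [ge_iff_le, le_div_iff₀ (by norm_num : (0:ℝ) < 8)]
        nlinarith
      have : ((n:ℝ)+1) * Real.log (Real.sqrt 2) ≤ (n:ℝ) + 1 := by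
        nlinarith
      nlinarith
    exact Real.tendsto_exp_atBot.comp hq
  apply squeeze_zero'
  · exact Filter.Eventually.of_forall fun k => by
      rw [s8B]; positivity
  · have hdev : ∀ᶠ k in atTop, s8d c k ≤ 1 :=
      (s8d_tendsto hc).eventually_le_const (by norm_num)
    filter_upwards [Filter.eventually_ge_atTop 4, hdev,
      s8log_tendsto.eventually_ge_atTop 1] with k hk4 hd1 hL1
    -- B k ≤ u (Nat.log 2 k)
    have hk' : (0:ℝ) < k := by
      have : (4:ℝ) ≤ k := by exact_mod_cast hk4
      linarith
    set L : ℝ := (Nat.log 2 k : ℝ) with hLdef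
    have hL0 : (0:ℝ) ≤ L := Nat.cast_nonneg _
    have hsk2 : (2:ℝ) ≤ Real.sqrt k := by
      have h4 : (4:ℝ) ≤ k := by exact_mod_cast hk4
      nlinarith [Real.sq_sqrt hk'.le, Real.sqrt_nonneg (k:ℝ)]
    -- m ≥ (√k/2) L
    have hm1 : (Real.sqrt k - 1) * L ≤ (s8m k : ℝ) := by
      rw [s8m]
      push_cast
      apply mul_le_mul_of_nonneg_right _ hL0
      linarith [Real.real_sqrt_le_nat_sqrt_succ (a := k)]
    have hm2 : (Real.sqrt k / 2) * L ≤ (s8m k : ℝ) := by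
      refine le_trans ?_ hm1
      apply mul_le_mul_of_nonneg_right _ hL0
      linarith
    have hmsq : (k:ℝ) * L^2 / 4 ≤ (s8m k:ℝ)^2 := by
      have h0 : (0:ℝ) ≤ (Real.sqrt k / 2) * L := by positivity
      have := mul_self_le_mul_self h0 hm2
      have hsq : (Real.sqrt k)^2 = (k:ℝ) := Real.sq_sqrt hk'.le
      nlinarith
    -- exponent bound
    have hexp : s8d c k - c * (s8m k:ℝ)^2 / (2*k) ≤ 1 - c * L^2 / 8 := by
      have h1 : c * (k * L^2/4) / (2*k) ≤ c * (s8m k:ℝ)^2 / (2*k) := by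
        gcongr
      have h2 : c * ((k:ℝ) * L^2/4) / (2*k) = c * L^2 / 8 := by
        field_simp
        ring
      rw [h2] at h1
      linarith
    -- sqrt k bound
    have hsqk : Real.sqrt k ≤ (Real.sqrt 2)^(Nat.log 2 k + 1) := by
      have h1 : k < 2^(Nat.log 2 k + 1) := Nat.lt_pow_succ_log_self one_lt_two k
      have h2 : (k:ℝ) ≤ ((2:ℝ))^(Nat.log 2 k + 1) := by exact_mod_cast h1.le
      have h3 := Real.sqrt_le_sqrt h2
      refine h3.trans (le_of_eq ?_)
      have h4 : ((Real.sqrt 2)^(Nat.log 2 k + 1))^2 = (2:ℝ)^(Nat.log 2 k + 1) := by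
        rw [← pow_mul, mul_comm, pow_mul, Real.sq_sqrt (by norm_num : (0:ℝ) ≤ 2)]
      rw [← h4, Real.sqrt_sq (by positivity)]
    have hpow : (Real.sqrt 2)^(Nat.log 2 k + 1) = Real.exp ((L+1) * Real.log (Real.sqrt 2)) := by
      rw [hLdef, show ((Nat.log 2 k : ℝ) + 1) = ((Nat.log 2 k + 1 : ℕ) : ℝ) by push_cast; ring,
        ← Real.log_pow, Real.exp_log (by positivity)]
    calc s8B c k = Real.sqrt k * Real.exp (s8d c k - c * (s8m k:ℝ)^2 / (2*(k:ℝ))) := by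
          rw [s8B]
      _ ≤ (Real.sqrt 2)^(Nat.log 2 k + 1) * Real.exp (1 - c * L^2/8) := by
          apply mul_le_mul hsqk (Real.exp_le_exp.2 hexp) (Real.exp_pos _).le (by positivity)
      _ = u (Nat.log 2 k) := by
          rw [hpow, hu, ← Real.exp_add]
          congr 1
          ring
  · exact hu0.comp s8log_tendsto

lemma s8m_le_sub_one : ∀ᶠ k in atTop, s8m k ≤ k - 1 := by
  have hEv : ∀ᶠ n : ℕ in atTop, ((n:ℝ))^3 ≤ (Real.sqrt 2)^n := by
    have h1 := s8aux1.eventually_le_const (by norm_num : (0:ℝ) < 1)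
    filter_upwards [h1] with n hn
    have hp : (0:ℝ) < (Real.sqrt 2)^n := by positivity
    rw [div_le_one hp] at hn
    linarith
  filter_upwards [Filter.eventually_ge_atTop 4, s8log_tendsto.eventually hEv,
    s8log_tendsto.eventually_ge_atTop 2] with k hk4 hcube hL2
  have hk' : (0:ℝ) < k := by
    have : (4:ℝ) ≤ k := by exact_mod_cast hk4
    linarith
  set L : ℝ := (Nat.log 2 k : ℝ) with hLdef
  have hL2' : (2:ℝ) ≤ L := by rw [hLdef]; exact_mod_cast hL2
  have hs2 := s8sqrt_ge (k := k) (by omega)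
  have hcube' : L^3 ≤ Real.sqrt k := le_trans hcube hs2
  have hL4 : 4 * L ≤ L^3 := by
    nlinarith [mul_nonneg (mul_nonneg (by linarith : (0:ℝ) ≤ L)
      (by linarith : (0:ℝ) ≤ L - 2)) (by linarith : (0:ℝ) ≤ L + 2)]
  have hmr : (s8m k : ℝ) ≤ (k:ℝ)/4 := by
    have h1 := s8m_le k
    have h2 : Real.sqrt k * L ≤ Real.sqrt k * (Real.sqrt k / 4) := by
      apply mul_le_mul_of_nonneg_left _ (Real.sqrt_nonneg _)
      linarith
    have h3 : Real.sqrt k * (Real.sqrt k/4) = (k:ℝ)/4 := by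
      rw [show Real.sqrt (k:ℝ) * (Real.sqrt k/4) = (Real.sqrt k)^2/4 by ring,
        Real.sq_sqrt hk'.le]
    linarith
  have : (s8m k : ℝ) ≤ ((k - 1 : ℕ) : ℝ) := by
    rw [Nat.cast_sub (by omega)]
    push_cast
    have : (4:ℝ) ≤ k := by exact_mod_cast hk4
    linarith
  exact_mod_cast this

end asymp

section final
variable {c : ℝ} (hc : 0 < c) {k : ℕ}
include hc

lemma s8lower_tendsto :
    Tendsto (fun k : ℕ => ∫ x in (2/Real.sqrt k)..(((k:ℝ)+1)/Real.sqrt k), s8gau c x)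
      atTop (𝓝 (∫ x in Set.Ioi (0:ℝ), s8gau c x)) := by
  have hint : ∀ a b : ℝ, IntervalIntegrable (s8gau c) MeasureTheory.volume a b :=
    fun a b => ((s8gau_cont hc).intervalIntegrable _ _)
  have hsub : ∀ k : ℕ, (∫ x in (2/Real.sqrt k)..(((k:ℝ)+1)/Real.sqrt k), s8gau c x)
      = (∫ x in (0:ℝ)..(((k:ℝ)+1)/Real.sqrt k), s8gau c x)
        - ∫ x in (0:ℝ)..(2/Real.sqrt k), s8gau c x :=
    fun k => (intervalIntegral.integral_interval_sub_left (hint _ _) (hint _ _)).symm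
  have htend : Tendsto (fun k : ℕ => ((k:ℝ)+1)/Real.sqrt k) atTop atTop := by
    apply tendsto_atTop_mono _ s8sqrt_tendsto
    intro k
    rcases Nat.eq_zero_or_pos k with h | h
    · simp [h]
    · have hk' : (0:ℝ) < k := by exact_mod_cast h
      have hs : 0 < Real.sqrt k := Real.sqrt_pos.2 hk'
      rw [le_div_iff₀ hs, Real.mul_self_sqrt hk'.le]
      linarith
  have T1 : Tendsto (fun k : ℕ => ∫ x in (0:ℝ)..(((k:ℝ)+1)/Real.sqrt k), s8gau c x)
      atTop (𝓝 (∫ x in Set.Ioi (0:ℝ), s8gau c x)) :=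
    MeasureTheory.intervalIntegral_tendsto_integral_Ioi 0 (s8gau_integrable hc) htend
  have T2 : Tendsto (fun k : ℕ => ∫ x in (0:ℝ)..(2/Real.sqrt k), s8gau c x) atTop (𝓝 0) := by
    apply squeeze_zero'
    · exact Filter.Eventually.of_forall fun k =>
        intervalIntegral.integral_nonneg (by positivity) (fun x _ => s8gau_nonneg x)
    · apply Filter.Eventually.of_forall
      intro k
      have ha : (0:ℝ) ≤ 2/Real.sqrt k := by positivity
      calc (∫ x in (0:ℝ)..(2/Real.sqrt k), s8gau c x)
          ≤ ∫ x in (0:ℝ)..(2/Real.sqrt k), (1:ℝ) := by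
            apply intervalIntegral.integral_mono_on ha (hint _ _)
              (intervalIntegrable_const)
            exact fun x _ => s8gau_le_one hc x
        _ = 2/Real.sqrt k := by simp
    · have h1 : Tendsto (fun k : ℕ => (Real.sqrt k)⁻¹) atTop (𝓝 0) :=
        s8sqrt_tendsto.inv_tendsto_atTop
      have := h1.const_mul (2:ℝ)
      simp only [mul_zero] at this
      simpa [div_eq_mul_inv] using this
  have := T1.sub T2
  rw [sub_zero] at this
  apply this.congr
  intro k
  exact (hsub k).symm

lemma s8Pm_le (hk : 1 ≤ k) :
    s8P c k (s8m k) ≤ Real.exp (s8d c k - c * ((s8m k):ℝ)^2 / (2*k)) := by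
  have hk' : (0:ℝ) < k := by exact_mod_cast Nat.lt_of_lt_of_le Nat.zero_lt_one hk
  refine (s8P_upper hc hk (s8m k)).trans ?_
  have hsq : (((s8m k):ℝ)/Real.sqrt k)^2 = ((s8m k):ℝ)^2 / k := by
    rw [div_pow, Real.sq_sqrt hk'.le]
  have hgau : s8gau c (((s8m k):ℝ)/Real.sqrt k) = Real.exp (-(c * ((s8m k):ℝ)^2 / (2*k))) := by
    simp only [s8gau, hsq]
    congr 1
    ring
  rw [hgau, ← Real.exp_add, s8d]
  apply Real.exp_le_exp.2
  apply le_of_eq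
  ring

lemma s8main :
    Tendsto (fun k : ℕ => (1 / Real.sqrt k) *
        ∑ i ∈ Finset.Icc 1 (k-1), ∏ j ∈ Finset.Icc 1 i, (k:ℝ)/(k + j*c))
      atTop (𝓝 (∫ x in Set.Ioi (0:ℝ), s8gau c x)) ∧
    Tendsto (fun k : ℕ => ∏ j ∈ Finset.Icc 1 (k-1), (k:ℝ)/(k + j*c)) atTop (𝓝 0) := by
  set I := ∫ x in Set.Ioi (0:ℝ), s8gau c x with hI
  constructor
  · have hupper : Tendsto (fun k : ℕ => Real.exp (s8d c k) * I + s8B c k) atTop (𝓝 I) := by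
      have h1 : Tendsto (fun k : ℕ => Real.exp (s8d c k)) atTop (𝓝 1) := by
        have := (Real.continuous_exp.tendsto' 0 1 Real.exp_zero).comp (s8d_tendsto hc)
        exact this
      have h2 := (h1.mul_const I).add (s8B_tendsto hc)
      simpa using h2
    apply tendsto_of_tendsto_of_tendsto_of_le_of_le' (s8lower_tendsto hc) hupper
    · filter_upwards [Filter.eventually_ge_atTop 1] with k hk
      exact s8T_lower hc hk
    · filter_upwards [Filter.eventually_ge_atTop 1, s8m_le_sub_one hc] with k hk hmk
      exact s8T_upper hc hk hmk
  · apply squeeze_zero'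
    · filter_upwards [Filter.eventually_ge_atTop 1] with k hk
      exact Finset.prod_nonneg fun j _ => (s8fac_pos hc hk j).le
    · filter_upwards [Filter.eventually_ge_atTop 1, s8m_le_sub_one hc] with k hk hmk
      have h1 : s8P c k (k-1) ≤ s8P c k (s8m k) := s8P_anti hc hk hmk
      have h2 := s8Pm_le hc hk
      have h3 : Real.exp (s8d c k - c * ((s8m k):ℝ)^2 / (2*k)) ≤ s8B c k := by
        rw [s8B]
        have hs1 : (1:ℝ) ≤ Real.sqrt k := by
          rw [show (1:ℝ) = Real.sqrt 1 by simp]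
          exact Real.sqrt_le_sqrt (by exact_mod_cast hk)
        nlinarith [Real.exp_pos (s8d c k - c * ((s8m k):ℝ)^2 / (2*k))]
      exact le_trans (le_trans h1 h2) h3
    · exact s8B_tendsto hc

end final

lemma s8I_val {c : ℝ} (hc : 0 < c) :
    (∫ x in Set.Ioi (0:ℝ), s8gau c x) = Real.sqrt (Real.pi/(c/2))/2 := by
  simpa [s8gau] using integral_gaussian_Ioi (c/2)

open Filter in
/-- For `b_i^{(k)} = Π_{j=1}^{i} k/(k + jλc/λ)` with fixed `λc, λ > 0`:
`(1/√k)·Σ_{i=1}^{k-1} b_i^{(k)} → √(πλ/(2λc))` and `b_{k-1}^{(k)} → 0` as `k → ∞`. -/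
theorem stmt_8 (lamC lam : ℝ) (hC : 0 < lamC) (hl : 0 < lam) :
    Tendsto (fun k : ℕ =>
        (1 / Real.sqrt k) *
          ∑ i ∈ Finset.Icc 1 (k - 1),
            ∏ j ∈ Finset.Icc 1 i, (k : ℝ) / (k + j * lamC / lam))
      atTop (nhds (Real.sqrt (Real.pi * lam / (2 * lamC)))) ∧
    Tendsto (fun k : ℕ =>
        ∏ j ∈ Finset.Icc 1 (k - 1), (k : ℝ) / (k + j * lamC / lam))
      atTop (nhds 0) := by
  have hc : 0 < lamC / lam := div_pos hC hl
  obtain ⟨h1, h2⟩ := s8main hc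
  have heq : Real.sqrt (Real.pi * lam / (2 * lamC))
      = ∫ x in Set.Ioi (0:ℝ), s8gau (lamC/lam) x := by
    rw [s8I_val hc]
    have e : Real.pi/((lamC/lam)/2) = (Real.pi*lam/(2*lamC)) * 2^2 := by
      field_simp
    rw [e, Real.sqrt_mul (by positivity) _, Real.sqrt_sq (by norm_num : (0:ℝ) ≤ 2)]
    ring
  constructor
  · rw [heq]
    have := h1
    simp only [← mul_div_assoc] at this
    exact this
  · have := h2
    simp only [← mul_div_assoc] at this
    exact this
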